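/- Let q be a prime power, r a positive integer, and A ⊆ F_q. Let x, y, y' be mutually independent random vectors, each uniformly distributed in F_q^r. Then the covariance of the random variables 1_A(x·y) and 1_A(x·y') equals q^{-r}(1 − q^{-r})·γ_A(q)². -/

import Mathlib

open scoped Classical BigOperators

noncomputable section

private lemma sum_dot {F : Type*} [Field F] [Fintype F] {r : ℕ}
    (x : Fin r → F) (hx : x ≠ 0) (f : F → ℝ) :
    ∑ y : Fin r → F, f (∑ i, x i * y i)
      = (Fintype.card F : ℝ) ^ (r - 1) * ∑ c, f c := by
  classical
  obtain ⟨j, hj⟩ : ∃ j, x j ≠ 0 := by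
    by_contra h; push_neg at h; exact hx (funext h)
  have key : ∀ y : Fin r → F,
      ∑ i, x i * y i = x j * y j + ∑ i ∈ Finset.univ.erase j, x i * y i :=
    fun y => (Finset.add_sum_erase _ _ (Finset.mem_univ j)).symm
  have erase_congr : ∀ (y : Fin r → F) (c : F),
      ∑ i ∈ Finset.univ.erase j, x i * (Function.update y j c) i
        = ∑ i ∈ Finset.univ.erase j, x i * y i := by
    intro y c
    refine Finset.sum_congr rfl fun i hi => ?_
    rw [Function.update_of_ne (Finset.ne_of_mem_erase hi)]
  let ψ : (Fin r → F) ≃ (Fin r → F) :=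
  { toFun := fun y => Function.update y j (∑ i, x i * y i)
    invFun := fun z => Function.update z j
      ((z j - ∑ i ∈ Finset.univ.erase j, x i * z i) / x j)
    left_inv := by
      intro y
      funext i
      beta_reduce
      rcases eq_or_ne i j with rfl | hi
      · rw [Function.update_self, Function.update_self, erase_congr, key y]
        field_simp
        ring
      · rw [Function.update_of_ne hi, Function.update_of_ne hi]
    right_inv := by
      intro z
      funext i
      beta_reduce
      rcases eq_or_ne i j with rfl | hi
      · rw [Function.update_self, key, Function.update_self, erase_congr]
        field_simp
        ring
      · rw [Function.update_of_ne hi, Function.update_of_ne hi] }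
  have h1 : ∑ y : Fin r → F, f (∑ i, x i * y i) = ∑ z : Fin r → F, f (z j) := by
    rw [← Equiv.sum_comp ψ (fun z => f (z j))]
    refine Finset.sum_congr rfl fun y _ => ?_
    simp [ψ]
  rw [h1, ← Equiv.sum_comp (Equiv.piSplitAt j (fun _ => F)).symm (fun z => f (z j))]
  have h3 : ∀ p : F × ({a : Fin r // a ≠ j} → F),
      ((Equiv.piSplitAt j (fun _ => F)).symm p) j = p.1 := by
    intro p; simp [Equiv.piSplitAt]
  simp only [h3]
  rw [Fintype.sum_prod_type]
  simp only [Finset.sum_const, Finset.card_univ, nsmul_eq_mul]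
  rw [← Finset.mul_sum]
  congr 1
  simp [Fintype.card_fun, Fintype.card_subtype_compl]

/-- `γ_A(q) = q⁻¹ #A - 1_A(0)`. -/
def gammaA {F : Type*} [Fintype F] [Zero F] (A : Finset F) : ℝ :=
  (A.card : ℝ) / (Fintype.card F : ℝ) - (if (0 : F) ∈ A then 1 else 0)

/-- Case 1 in the proof of Lemma 3.1: for mutually independent uniform `x, y, y' ∈ F^r`,
the covariance of `1_A(x·y)` and `1_A(x·y')` equals `q^{-r}(1 - q^{-r}) γ_A(q)²`. -/
theorem covariance_indicator_dot_prod
    {F : Type*} [Field F] [Fintype F] (A : Finset F) (r : ℕ) (hr : 0 < r) :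
    (∑ p : (Fin r → F) × (Fin r → F) × (Fin r → F),
        (if (∑ i, p.1 i * p.2.1 i) ∈ A then (1 : ℝ) else 0) *
        (if (∑ i, p.1 i * p.2.2 i) ∈ A then (1 : ℝ) else 0)) /
      (Fintype.card ((Fin r → F) × (Fin r → F) × (Fin r → F)) : ℝ) -
    ((∑ p : (Fin r → F) × (Fin r → F) × (Fin r → F),
        (if (∑ i, p.1 i * p.2.1 i) ∈ A then (1 : ℝ) else 0)) /
      (Fintype.card ((Fin r → F) × (Fin r → F) × (Fin r → F)) : ℝ)) *
    ((∑ p : (Fin r → F) × (Fin r → F) × (Fin r → F),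
        (if (∑ i, p.1 i * p.2.2 i) ∈ A then (1 : ℝ) else 0)) /
      (Fintype.card ((Fin r → F) × (Fin r → F) × (Fin r → F)) : ℝ)) =
    ((Fintype.card F : ℝ))⁻¹ ^ r * (1 - ((Fintype.card F : ℝ))⁻¹ ^ r) * gammaA A ^ 2 := by
  classical
  obtain ⟨s, rfl⟩ : ∃ s, r = s + 1 := ⟨r - 1, (Nat.succ_pred_eq_of_pos hr).symm⟩
  set q : ℝ := (Fintype.card F : ℝ) with hqdef
  have hq0 : 0 < q := by
    simp only [hqdef, Nat.cast_pos]; exact Fintype.card_pos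
  set g : F → ℝ := fun c => if c ∈ A then 1 else 0 with hg
  have hsumg : ∑ c, g c = (A.card : ℝ) := by
    simp [hg, Finset.sum_boole, Finset.filter_univ_mem]
  -- cardinality of the big type
  have hN : (Fintype.card (Fin (s+1) → F) : ℝ) = q ^ (s+1) := by
    simp [hqdef, Fintype.card_fun]
  have hcard : (Fintype.card ((Fin (s+1) → F) × (Fin (s+1) → F) × (Fin (s+1) → F)) : ℝ)
      = (q ^ (s+1)) ^ 3 := by
    simp [Fintype.card_prod, hN]; ring
  -- inner sums over y for fixed x
  have hinner : ∀ x : Fin (s+1) → F,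
      ∑ y : Fin (s+1) → F, g (∑ i, x i * y i)
        = if x = 0 then q ^ (s+1) * g 0 else q ^ s * (A.card : ℝ) := by
    intro x
    by_cases hx : x = 0
    · subst hx
      simp only [Pi.zero_apply, zero_mul, Finset.sum_const_zero, if_true]
      rw [Finset.sum_const, Finset.card_univ, nsmul_eq_mul, hN]
    · rw [if_neg hx, sum_dot x hx g, hsumg]
      norm_num
      exact Or.inl rfl
  set e : ℝ := if (0:F) ∈ A then 1 else 0 with he
  have hg0 : g 0 = e := rfl
  -- triple sums
  have split : ∀ u : (Fin (s+1) → F) → ℝ,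
      (∑ x : Fin (s+1) → F, u x) = u 0 + ∑ x ∈ Finset.univ \ {0}, u x := by
    intro u
    rw [Finset.sum_eq_sum_sdiff_singleton_add (Finset.mem_univ (0 : Fin (s+1) → F))]
    ring
  have hcard_sdiff : ((Finset.univ \ {(0 : Fin (s+1) → F)}).card : ℝ) = q ^ (s+1) - 1 := by
    rw [Finset.card_sdiff_of_subset (Finset.singleton_subset_iff.mpr (Finset.mem_univ _))]
    rw [Finset.card_singleton, Finset.card_univ]
    rw [Nat.cast_sub Fintype.card_pos, hN, Nat.cast_one]
  -- S1
  have hS1 : (∑ p : (Fin (s+1) → F) × (Fin (s+1) → F) × (Fin (s+1) → F),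
      (if (∑ i, p.1 i * p.2.1 i) ∈ A then (1 : ℝ) else 0))
      = q ^ (s+1) * (q ^ (s+1) * e + (q^(s+1) - 1) * (q ^ s * A.card)) := by
    rw [Fintype.sum_prod_type]
    have : ∀ x : Fin (s+1) → F,
        (∑ p : (Fin (s+1) → F) × (Fin (s+1) → F),
          (if (∑ i, x i * p.1 i) ∈ A then (1:ℝ) else 0))
        = q ^ (s+1) * ∑ y : Fin (s+1) → F, g (∑ i, x i * y i) := by
      intro x
      rw [Fintype.sum_prod_type]
      simp only [Finset.sum_const, Finset.card_univ, nsmul_eq_mul]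
      rw [← Finset.mul_sum, hN]
    simp only [this]
    rw [← Finset.mul_sum]
    congr 1
    rw [split fun x => ∑ y : Fin (s+1) → F, g (∑ i, x i * y i)]
    have h0 := hinner 0
    rw [if_pos rfl] at h0
    rw [h0, hg0]
    congr 1
    rw [Finset.sum_congr rfl (fun x hx => by
      rw [hinner x, if_neg (by simpa using (Finset.mem_sdiff.mp hx).2)]),
      Finset.sum_const, nsmul_eq_mul, hcard_sdiff]
  have hS1' : (∑ p : (Fin (s+1) → F) × (Fin (s+1) → F) × (Fin (s+1) → F),
      (if (∑ i, p.1 i * p.2.2 i) ∈ A then (1 : ℝ) else 0))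
      = q ^ (s+1) * (q ^ (s+1) * e + (q^(s+1) - 1) * (q ^ s * A.card)) := by
    have : ∀ x : Fin (s+1) → F,
        (∑ p : (Fin (s+1) → F) × (Fin (s+1) → F),
          (if (∑ i, x i * p.2 i) ∈ A then (1:ℝ) else 0))
        = q ^ (s+1) * ∑ y : Fin (s+1) → F, g (∑ i, x i * y i) := by
      intro x
      rw [Fintype.sum_prod_type]
      simp only [Finset.sum_const, Finset.card_univ, nsmul_eq_mul]
      rw [hN]
    rw [Fintype.sum_prod_type]
    simp only [this]
    rw [← Finset.mul_sum]
    congr 1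
    rw [split fun x => ∑ y : Fin (s+1) → F, g (∑ i, x i * y i)]
    have h0 := hinner 0
    rw [if_pos rfl] at h0
    rw [h0, hg0]
    congr 1
    rw [Finset.sum_congr rfl (fun x hx => by
      rw [hinner x, if_neg (by simpa using (Finset.mem_sdiff.mp hx).2)]),
      Finset.sum_const, nsmul_eq_mul, hcard_sdiff]
  -- S2
  have hS2 : (∑ p : (Fin (s+1) → F) × (Fin (s+1) → F) × (Fin (s+1) → F),
      (if (∑ i, p.1 i * p.2.1 i) ∈ A then (1 : ℝ) else 0) *
      (if (∑ i, p.1 i * p.2.2 i) ∈ A then (1 : ℝ) else 0))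
      = (q ^ (s+1) * e) ^ 2 + (q^(s+1) - 1) * (q ^ s * A.card) ^ 2 := by
    rw [Fintype.sum_prod_type]
    have : ∀ x : Fin (s+1) → F,
        (∑ p : (Fin (s+1) → F) × (Fin (s+1) → F),
          (if (∑ i, x i * p.1 i) ∈ A then (1:ℝ) else 0) *
          (if (∑ i, x i * p.2 i) ∈ A then (1:ℝ) else 0))
        = (∑ y : Fin (s+1) → F, g (∑ i, x i * y i)) ^ 2 := by
      intro x
      rw [Fintype.sum_prod_type, sq, Finset.sum_mul_sum]
    simp only [this]
    rw [split fun x => (∑ y : Fin (s+1) → F, g (∑ i, x i * y i)) ^ 2]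
    have h0 := hinner 0
    rw [if_pos rfl] at h0
    rw [h0, hg0]
    congr 1
    rw [Finset.sum_congr rfl (fun x hx => by
      rw [hinner x, if_neg (by simpa using (Finset.mem_sdiff.mp hx).2)]),
      Finset.sum_const, nsmul_eq_mul, hcard_sdiff]
  rw [hS1, hS1', hS2, hcard]
  rw [gammaA]
  rw [← hqdef, ← he]
  have hq : q ≠ 0 := ne_of_gt hq0
  have hee : e ^ 2 = e := by
    rw [he]; split <;> norm_num
  simp only [inv_pow]
  field_simp
  ring_nf

end
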